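/- Let G be a finite group, p a prime, and let A be a subgroup of maximum order among the self-centralizing subgroups of G. Suppose |G : A| = p^2 and |G : Z(G)| = p^4. Then CD(G) equals the union of: {Z(G), G}, the set of all subgroups B of G with |G : B| = p^2 and |G : C_G(B)| = p^2, the set of all subgroups T of G with |G : T| = p and |G : Z(T)| = p^3, and the set of centers Z(T) of all such subgroups T. Moreover, if there exists at least one subgroup T with |G : T| = p and |G : Z(T)| = p^3, then there are at least p+1 subgroups B with |G : B| = p^2 and |G : C_G(B)| = p^2. -/

import Mathlib

/-- The Chermak-Delgado measure of a subgroup `H` of `G`: `|H| · |C_G(H)|`. -/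
noncomputable def cdMeasure (G : Type*) [Group G] (H : Subgroup G) : ℕ :=
  Nat.card H * Nat.card (Subgroup.centralizer (H : Set G))

/-- The Chermak-Delgado lattice of `G`: the set of subgroups whose
Chermak-Delgado measure is maximal. -/
def CD (G : Type*) [Group G] : Set (Subgroup G) :=
  {H : Subgroup G | ∀ K : Subgroup G, cdMeasure G K ≤ cdMeasure G H}

/-- The center of a subgroup `T` of `G`, regarded as a subgroup of `G`. -/
def centerIn {G : Type*} [Group G] (T : Subgroup G) : Subgroup G :=
  (Subgroup.center T).map T.subtype

section Aux

variable {G : Type*} [Group G]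

lemma aux_card_le_of_le [Finite G] {H K : Subgroup G} (h : H ≤ K) :
    Nat.card H ≤ Nat.card K :=
  Nat.le_of_dvd Nat.card_pos (Subgroup.card_dvd_of_le h)

lemma aux_eq_of_le_of_card_le [Finite G] {H K : Subgroup G} (h : H ≤ K)
    (hc : Nat.card K ≤ Nat.card H) : H = K := by
  apply SetLike.coe_injective
  apply Set.eq_of_subset_of_ncard_le h ?_ (Set.toFinite _)
  rwa [← Nat.card_coe_set_eq, ← Nat.card_coe_set_eq]

lemma aux_centerIn_eq (T : Subgroup G) :
    centerIn T = T ⊓ Subgroup.centralizer (T : Set G) := by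
  ext x
  simp only [centerIn, Subgroup.mem_map, Subgroup.mem_inf, Subgroup.mem_center_iff,
    Subgroup.mem_centralizer_iff, Subgroup.coe_subtype]
  constructor
  · rintro ⟨⟨y, hy⟩, hc, rfl⟩
    exact ⟨hy, fun h hh => congrArg Subtype.val (hc ⟨h, hh⟩)⟩
  · rintro ⟨hxT, hc⟩
    exact ⟨⟨x, hxT⟩, fun g => Subtype.ext (hc g g.2), rfl⟩

/-- product formula for mutually centralizing subgroups -/
lemma aux_card_sup_inf [Finite G] (H K : Subgroup G)
    (hc : K ≤ Subgroup.centralizer (H : Set G)) :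
    Nat.card H * Nat.card K = Nat.card (H ⊔ K : Subgroup G) * Nat.card (H ⊓ K : Subgroup G) := by
  have hcomm : ∀ (h : H) (k : K), Commute (H.subtype h) (K.subtype k) := by
    intro h k
    exact Subgroup.mem_centralizer_iff.mp (hc k.2) (h : G) h.2
  set φ : H × K →* G := MonoidHom.noncommCoprod H.subtype K.subtype hcomm with hφ
  have happ : ∀ (h : H) (k : K), φ (h, k) = (h : G) * (k : G) := fun _ _ => rfl
  have hrange : φ.range = H ⊔ K := by
    apply le_antisymm
    · rintro _ ⟨⟨h, k⟩, rfl⟩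
      exact mul_mem (le_sup_left (α := Subgroup G) h.2) (le_sup_right (α := Subgroup G) k.2)
    · refine sup_le ?_ ?_
      · intro x hx
        exact ⟨(⟨x, hx⟩, 1), by simp [happ]⟩
      · intro x hx
        exact ⟨(1, ⟨x, hx⟩), by simp [happ]⟩
  have hker : Nat.card φ.ker = Nat.card (H ⊓ K : Subgroup G) := by
    apply Nat.card_congr
    refine ⟨fun y => ⟨((y : H × K).1 : G), (y : H × K).1.2, ?_⟩,
      fun x => ⟨(⟨(x : G), x.2.1⟩, ⟨(x : G)⁻¹, K.inv_mem x.2.2⟩), ?_⟩, ?_, ?_⟩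
    · -- membership in K
      have hy := y.2
      rw [MonoidHom.mem_ker] at hy
      have : ((y : H × K).1 : G) = (((y : H × K).2 : G))⁻¹ := by
        have := happ (y : H × K).1 (y : H × K).2
        rw [Prod.mk.eta] at this
        rw [this] at hy
        exact eq_inv_of_mul_eq_one_left hy
      rw [this]
      exact K.inv_mem (y : H × K).2.2
    · rw [MonoidHom.mem_ker, happ]
      simp
    · rintro ⟨⟨h, k⟩, hy⟩
      have hy' := hy
      rw [MonoidHom.mem_ker, happ] at hy'
      have hk : (k : G) = (h : G)⁻¹ := eq_inv_of_mul_eq_one_right hy'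
      apply Subtype.ext
      apply Prod.ext
      · rfl
      · apply Subtype.ext
        simp [hk]
    · intro x
      apply Subtype.ext
      rfl
  have h1 : Nat.card (H × K) = Nat.card φ.range * Nat.card φ.ker := by
    rw [Subgroup.card_eq_card_quotient_mul_card_subgroup φ.ker]
    congr 1
    exact Nat.card_congr (QuotientGroup.quotientKerEquivRange φ).toEquiv
  rw [Nat.card_prod] at h1
  rw [h1, hrange, hker]

/-- a subgroup generated by an abelian subgroup and a centralizing element
is "abelian" (contained in its own centralizer) -/
lemma aux_sup_zpowers_le_centralizer {N : Subgroup G} {x : G}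
    (hNN : N ≤ Subgroup.centralizer (N : Set G))
    (hx : x ∈ Subgroup.centralizer (N : Set G)) :
    N ⊔ Subgroup.zpowers x ≤
      Subgroup.centralizer ((N ⊔ Subgroup.zpowers x : Subgroup G) : Set G) := by
  have hxx : x ∈ Subgroup.centralizer ((Subgroup.zpowers x : Subgroup G) : Set G) := by
    rw [Subgroup.mem_centralizer_iff]
    intro h hh
    simp only [SetLike.mem_coe, Subgroup.mem_zpowers_iff] at hh
    obtain ⟨n, rfl⟩ := hh
    exact ((Commute.refl x).zpow_left n).eq
  have h1 : N ⊔ Subgroup.zpowers x ≤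
      Subgroup.centralizer ((Subgroup.zpowers x : Subgroup G) : Set G) :=
    sup_le (Subgroup.le_centralizer_iff.mpr (Subgroup.zpowers_le.mpr hx))
      (Subgroup.zpowers_le.mpr hxx)
  refine sup_le (Subgroup.le_centralizer_iff.mpr (sup_le hNN (Subgroup.zpowers_le.mpr hx))) ?_
  exact Subgroup.le_centralizer_iff.mpr h1

/-- every "abelian" subgroup extends to a self-centralizing one -/
lemma aux_exists_selfCentralizing [Finite G] (E : Subgroup G)
    (hE : E ≤ Subgroup.centralizer (E : Set G)) :
    ∃ D : Subgroup G, Subgroup.centralizer (D : Set G) = D ∧ E ≤ D := by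
  obtain ⟨D, hD, hmax⟩ := Set.Finite.exists_maximalFor (fun D : Subgroup G => Nat.card D)
    {D : Subgroup G | E ≤ D ∧ D ≤ Subgroup.centralizer (D : Set G)} (Set.toFinite _)
    ⟨E, le_rfl, hE⟩
  refine ⟨D, le_antisymm ?_ hD.2, hD.1⟩
  intro x hx
  set M := D ⊔ Subgroup.zpowers x with hM
  have hDM : D ≤ M := le_sup_left
  have hxM : x ∈ M := le_sup_right (α := Subgroup G) (Subgroup.mem_zpowers x)
  have hMc : M ≤ Subgroup.centralizer (M : Set G) := aux_sup_zpowers_le_centralizer hD.2 hx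
  have hcard := hmax (j := M) ⟨hD.1.trans hDM, hMc⟩ (aux_card_le_of_le hDM)
  have : D = M := aux_eq_of_le_of_card_le hDM hcard
  rw [this]
  exact hxM

/-- A subgroup with an "abelian" subgroup of prime index that centralizes it
is itself "abelian". -/
lemma aux_le_centralizer_self [Finite G] {p : ℕ} (hp : p.Prime) {N B : Subgroup G}
    (hNB : N ≤ B) (hNc : N ≤ Subgroup.centralizer (B : Set G))
    (hcard : Nat.card B = p * Nat.card N) :
    B ≤ Subgroup.centralizer (B : Set G) := by
  have hposN : 0 < Nat.card N := Nat.card_pos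
  have hNN : N ≤ Subgroup.centralizer (N : Set G) :=
    hNc.trans (Subgroup.centralizer_le (SetLike.coe_subset_coe.mpr hNB))
  have hne : N ≠ B := by
    intro h
    rw [← h] at hcard
    nlinarith [hp.two_le]
  obtain ⟨x, hxB, hxN⟩ := SetLike.exists_of_lt (lt_of_le_of_ne hNB hne)
  have hxc : x ∈ Subgroup.centralizer (N : Set G) := by
    rw [Subgroup.mem_centralizer_iff]
    intro h hh
    exact (Subgroup.mem_centralizer_iff.mp (hNc hh) x hxB).symm
  set M := N ⊔ Subgroup.zpowers x with hMdef
  have hMB : M ≤ B := sup_le hNB (Subgroup.zpowers_le.mpr hxB)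
  have hNM : N ≤ M := le_sup_left
  obtain ⟨t, ht⟩ := Subgroup.card_dvd_of_le hNM
  have htp : t ∣ p := by
    have hd : Nat.card N * t ∣ Nat.card N * p := by
      rw [← ht, mul_comm (Nat.card N) p, ← hcard]
      exact Subgroup.card_dvd_of_le hMB
    exact (Nat.mul_dvd_mul_iff_left hposN).mp hd
  have ht1 : t ≠ 1 := by
    intro h
    rw [h, mul_one] at ht
    have hNM' : N = M := aux_eq_of_le_of_card_le hNM ht.le
    apply hxN
    rw [hNM']
    exact le_sup_right (α := Subgroup G) (Subgroup.mem_zpowers x)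
  have htp' : t = p := ((hp.eq_one_or_self_of_dvd t htp)).resolve_left ht1
  have hMB' : M = B := by
    apply aux_eq_of_le_of_card_le hMB
    rw [hcard, ht, htp', mul_comm]
  rw [← hMB']
  exact aux_sup_zpowers_le_centralizer hNN hxc

end Aux

section Main

variable {G : Type*} [Group G] [Finite G] {p : ℕ}

lemma aux_idx_card (H : Subgroup G) : H.index * Nat.card H = Nat.card G := by
  rw [mul_comm]; exact Subgroup.card_mul_index H

lemma aux_measure_prod (H : Subgroup G) :
    cdMeasure G H * (H.index * (Subgroup.centralizer (H : Set G)).index) =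
      Nat.card G * Nat.card G := by
  unfold cdMeasure
  rw [mul_mul_mul_comm, Subgroup.card_mul_index, Subgroup.card_mul_index]

lemma aux_abelian_bound (hp : p.Prime) {A : Subgroup G}
    (hAmax : ∀ B : Subgroup G, Subgroup.centralizer (B : Set G) = B →
      Nat.card B ≤ Nat.card A)
    (hiA : A.index = p ^ 2) {E : Subgroup G}
    (hE : E ≤ Subgroup.centralizer (E : Set G)) :
    p ^ 2 ≤ E.index ∧ (E.index = p ^ 2 → Subgroup.centralizer (E : Set G) = E) := by
  obtain ⟨D, hD, hED⟩ := aux_exists_selfCentralizing E hE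
  have hDA : Nat.card D ≤ Nat.card A := hAmax D hD
  have hEA : Nat.card E ≤ Nat.card A := (aux_card_le_of_le hED).trans hDA
  have hidx : A.index ≤ E.index := by
    by_contra hcon
    push_neg at hcon
    have h1 := aux_idx_card E
    have h2 := aux_idx_card A
    have hposE : 0 < Nat.card E := Nat.card_pos
    nlinarith
  constructor
  · rwa [hiA] at hidx
  · intro hEidx
    have hcards : Nat.card E = Nat.card A := by
      have h1 := Subgroup.card_mul_index E
      have h2 := Subgroup.card_mul_index A
      rw [hEidx, ← hiA] at h1
      exact Nat.eq_of_mul_eq_mul_right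
        (Nat.pos_of_ne_zero Subgroup.index_ne_zero_of_finite) (h1.trans h2.symm)
    have hED' : E = D := aux_eq_of_le_of_card_le hED (hDA.trans hcards.ge)
    rw [hED']
    exact hD

lemma aux_key_ineq (hp : p.Prime) {A : Subgroup G}
    (hAmax : ∀ B : Subgroup G, Subgroup.centralizer (B : Set G) = B →
      Nat.card B ≤ Nat.card A)
    (hiA : A.index = p ^ 2) (hZ : (Subgroup.center G).index = p ^ 4)
    (H : Subgroup G) :
    p ^ 4 ≤ H.index * (Subgroup.centralizer (H : Set G)).index := by
  have idxpos : ∀ J : Subgroup G, 0 < J.index :=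
    fun J => Nat.pos_of_ne_zero Subgroup.index_ne_zero_of_finite
  suffices hcl : ∀ L : Subgroup G,
      Subgroup.centralizer ((Subgroup.centralizer (L : Set G)) : Set G) = L →
      p ^ 4 ≤ L.index * (Subgroup.centralizer (L : Set G)).index by
    set K := Subgroup.centralizer (H : Set G) with hKdef
    set L := Subgroup.centralizer (K : Set G) with hLdef
    have hHL : H ≤ L := Subgroup.le_centralizer_iff.mpr le_rfl
    have hLK : Subgroup.centralizer (L : Set G) = K := by
      apply le_antisymm
      · exact Subgroup.centralizer_le (SetLike.coe_subset_coe.mpr hHL)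
      · exact Subgroup.le_centralizer_iff.mpr le_rfl
    have h := hcl L (by rw [hLK])
    rw [hLK] at h
    calc p ^ 4 ≤ L.index * K.index := h
      _ ≤ H.index * K.index := by
          exact Nat.mul_le_mul_right _
            (Nat.le_of_dvd (idxpos H) (Subgroup.index_dvd_of_le hHL))
  intro H hHc
  have idxpos : ∀ J : Subgroup G, 0 < J.index :=
    fun J => Nat.pos_of_ne_zero Subgroup.index_ne_zero_of_finite
  have cardpos : ∀ J : Subgroup G, 0 < Nat.card J := fun J => Nat.card_pos
  set K := Subgroup.centralizer (H : Set G) with hKdef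
  have hHK : H ≤ Subgroup.centralizer (K : Set G) := hHc.ge
  set E := H ⊓ K with hEdef
  set S := H ⊔ K with hSdef
  have hZH : Subgroup.center G ≤ H := by
    rw [← hHc]; exact Subgroup.center_le_centralizer _
  have hZK : Subgroup.center G ≤ K := Subgroup.center_le_centralizer _
  have hZE : Subgroup.center G ≤ E := le_inf hZH hZK
  have hZS : Subgroup.center G ≤ S := hZH.trans le_sup_left
  have hEc : E ≤ Subgroup.centralizer (E : Set G) := by
    intro x hx
    rw [Subgroup.mem_centralizer_iff]
    intro y hy
    have hxK : x ∈ K := (Subgroup.mem_inf.mp hx).2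
    have hyH : y ∈ H := (Subgroup.mem_inf.mp hy).1
    exact Subgroup.mem_centralizer_iff.mp hxK y hyH
  have hcard : Nat.card H * Nat.card K = Nat.card S * Nat.card E :=
    aux_card_sup_inf H K le_rfl
  have hidx : H.index * K.index = S.index * E.index := by
    have h1 : (H.index * K.index) * (Nat.card H * Nat.card K) =
        Nat.card G * Nat.card G := by
      rw [mul_mul_mul_comm, aux_idx_card, aux_idx_card]
    have h2 : (S.index * E.index) * (Nat.card H * Nat.card K) =
        Nat.card G * Nat.card G := by
      rw [hcard, mul_mul_mul_comm, aux_idx_card, aux_idx_card]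
    exact Nat.eq_of_mul_eq_mul_right
      (Nat.mul_pos (cardpos H) (cardpos K)) (h1.trans h2.symm)
  have hEdvd : E.index ∣ p ^ 4 := by
    rw [← hZ]; exact Subgroup.index_dvd_of_le hZE
  obtain ⟨j, hj4, hEidx⟩ := (Nat.dvd_prime_pow hp).mp hEdvd
  have hablow := aux_abelian_bound hp hAmax hiA hEc
  have hElower : p ^ 2 ≤ E.index := hablow.1
  have hj2 : 2 ≤ j := by
    rw [hEidx] at hElower
    exact (Nat.pow_le_pow_iff_right hp.one_lt).mp hElower
  -- helper inclusions
  have hHcE : H ≤ Subgroup.centralizer (E : Set G) :=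
    hHK.trans (Subgroup.centralizer_le (SetLike.coe_subset_coe.mpr inf_le_right))
  have hKcE : K ≤ Subgroup.centralizer (E : Set G) :=
    Subgroup.centralizer_le (SetLike.coe_subset_coe.mpr inf_le_left)
  interval_cases j
  · -- j = 2 : E is self-centralizing of maximal order
    have hsc : Subgroup.centralizer (E : Set G) = E := hablow.2 hEidx
    have hHE : H = E := le_antisymm (by rw [← hsc]; exact hHcE) inf_le_left
    have hKE : K = E := le_antisymm (by rw [← hsc]; exact hKcE) inf_le_right
    rw [hHE, hKE, hEidx]
    ring_nf
    exact le_rfl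
  · -- j = 3 : S is proper
    have hSne : S ≠ ⊤ := by
      intro hS
      have hScE : S ≤ Subgroup.centralizer (E : Set G) := sup_le hHcE hKcE
      have htop : Subgroup.centralizer (E : Set G) = ⊤ :=
        top_le_iff.mp (hS ▸ hScE)
      have hEuZ : (E : Set G) ⊆ Subgroup.center G :=
        Subgroup.centralizer_eq_top_iff_subset.mp htop
      have : E = Subgroup.center G := le_antisymm hEuZ hZE
      rw [this, hZ] at hEidx
      exact absurd (Nat.pow_right_injective hp.two_le hEidx) (by omega)
    have hSidx : p ∣ S.index := by
      have hSdvd : S.index ∣ p ^ 4 := by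
        rw [← hZ]; exact Subgroup.index_dvd_of_le hZS
      obtain ⟨m, hm4, hSm⟩ := (Nat.dvd_prime_pow hp).mp hSdvd
      have hm0 : m ≠ 0 := by
        intro h
        rw [h, pow_zero] at hSm
        exact hSne (Subgroup.index_eq_one.mp hSm)
      rw [hSm]
      exact dvd_pow_self p hm0
    have hSp : p ≤ S.index := Nat.le_of_dvd (idxpos S) hSidx
    calc p ^ 4 = p * p ^ 3 := by ring
      _ ≤ S.index * E.index := by rw [hEidx]; exact Nat.mul_le_mul_right _ hSp
      _ = H.index * K.index := hidx.symm
  · -- j = 4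
    rw [hidx, hEidx]
    exact Nat.le_mul_of_pos_left _ (idxpos S)



end Main

theorem stmt_5 (G : Type*) [Group G] [Finite G] (p : ℕ) (hp : p.Prime)
    (A : Subgroup G) (hA : Subgroup.centralizer (A : Set G) = A)
    (hAmax : ∀ B : Subgroup G, Subgroup.centralizer (B : Set G) = B →
      Nat.card B ≤ Nat.card A)
    (hiA : A.index = p ^ 2) (hZ : (Subgroup.center G).index = p ^ 4) :
    CD G = {Subgroup.center G, ⊤} ∪
      {B : Subgroup G | B.index = p ^ 2 ∧
        (Subgroup.centralizer (B : Set G)).index = p ^ 2} ∪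
      {T : Subgroup G | T.index = p ∧ (centerIn T).index = p ^ 3} ∪
      {Z : Subgroup G | ∃ T : Subgroup G, T.index = p ∧
        (centerIn T).index = p ^ 3 ∧ Z = centerIn T} ∧
    ((∃ T : Subgroup G, T.index = p ∧ (centerIn T).index = p ^ 3) →
      p + 1 ≤ {B : Subgroup G | B.index = p ^ 2 ∧
        (Subgroup.centralizer (B : Set G)).index = p ^ 2}.ncard) := by
  have idxpos : ∀ J : Subgroup G, 0 < J.index :=
    fun J => Nat.pos_of_ne_zero Subgroup.index_ne_zero_of_finite
  have cardpos : ∀ J : Subgroup G, 0 < Nat.card J := fun J => Nat.card_pos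
  have key := aux_key_ineq hp hAmax hiA hZ
  have hppos : 0 < p := hp.pos
  have hp4 : 0 < p ^ 4 := pow_pos hppos 4
  have hcentZ : Subgroup.centralizer ((Subgroup.center G) : Set G) = ⊤ :=
    Subgroup.centralizer_eq_top_iff_subset.mpr (fun x hx => hx)
  have hmZ : cdMeasure G (Subgroup.center G) =
      Nat.card G * Nat.card (Subgroup.center G) := by
    unfold cdMeasure
    rw [hcentZ, Subgroup.card_top, mul_comm]
  have hnn : Nat.card G * Nat.card G = cdMeasure G (Subgroup.center G) * p ^ 4 := by
    rw [hmZ]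
    have h := Subgroup.card_mul_index (Subgroup.center G)
    rw [hZ] at h
    calc Nat.card G * Nat.card G
        = Nat.card G * (Nat.card (Subgroup.center G) * p ^ 4) := by rw [h]
      _ = Nat.card G * Nat.card (Subgroup.center G) * p ^ 4 := by ring
  have hmax : ∀ H : Subgroup G, cdMeasure G H ≤ cdMeasure G (Subgroup.center G) := by
    intro H
    have h1 := aux_measure_prod H
    rw [hnn] at h1
    have h2 : cdMeasure G H * p ^ 4 ≤ cdMeasure G (Subgroup.center G) * p ^ 4 := by
      calc cdMeasure G H * p ^ 4
          ≤ cdMeasure G H * (H.index * (Subgroup.centralizer (H : Set G)).index) :=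
            Nat.mul_le_mul_left _ (key H)
        _ = _ := h1
    exact Nat.le_of_mul_le_mul_right h2 hp4
  have hCDiff : ∀ H : Subgroup G, H ∈ CD G ↔
      H.index * (Subgroup.centralizer (H : Set G)).index = p ^ 4 := by
    intro H
    constructor
    · intro hH
      have heq : cdMeasure G H = cdMeasure G (Subgroup.center G) :=
        le_antisymm (hmax H) (hH _)
      have h1 := aux_measure_prod H
      rw [heq, hnn] at h1
      have hpos : 0 < cdMeasure G (Subgroup.center G) := by
        rw [hmZ]; exact Nat.mul_pos Nat.card_pos (cardpos _)
      exact Nat.eq_of_mul_eq_mul_left hpos h1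
    · intro hX K
      have h1 := aux_measure_prod H
      rw [hX, hnn] at h1
      have heq : cdMeasure G H = cdMeasure G (Subgroup.center G) :=
        Nat.eq_of_mul_eq_mul_right hp4 h1
      rw [heq]
      exact hmax K
  constructor
  · -- the set equality
    ext H
    simp only [Set.mem_union, Set.mem_insert_iff, Set.mem_singleton_iff, Set.mem_setOf_eq]
    rw [hCDiff H]
    constructor
    · intro hX
      have hHCD : H ∈ CD G := (hCDiff H).mpr hX
      have hcsup : Subgroup.centralizer ((H ⊔ Subgroup.center G : Subgroup G) : Set G) =
          Subgroup.centralizer (H : Set G) := by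
        apply le_antisymm (Subgroup.centralizer_le (SetLike.coe_subset_coe.mpr le_sup_left))
        intro g hg
        have hsub : (H ⊔ Subgroup.center G) ≤
            Subgroup.centralizer ((Subgroup.zpowers g : Subgroup G) : Set G) :=
          sup_le (Subgroup.le_centralizer_iff.mpr (Subgroup.zpowers_le.mpr hg))
            (Subgroup.center_le_centralizer _)
        exact Subgroup.zpowers_le.mp (Subgroup.le_centralizer_iff.mpr hsub)
      have hZle : Subgroup.center G ≤ H := by
        have h1 : cdMeasure G (H ⊔ Subgroup.center G) ≤ cdMeasure G H := hHCD _
        unfold cdMeasure at h1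
        rw [hcsup] at h1
        have h2 : Nat.card (H ⊔ Subgroup.center G : Subgroup G) ≤ Nat.card H :=
          Nat.le_of_mul_le_mul_right h1 (cardpos _)
        have h3 : H = H ⊔ Subgroup.center G := aux_eq_of_le_of_card_le le_sup_left h2
        exact le_sup_right.trans h3.ge
      have hclosed : Subgroup.centralizer
          ((Subgroup.centralizer (H : Set G)) : Set G) = H := by
        have h1 : cdMeasure G (Subgroup.centralizer (H : Set G)) ≤ cdMeasure G H := hHCD _
        have hle : H ≤ Subgroup.centralizer ((Subgroup.centralizer (H : Set G)) : Set G) :=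
          Subgroup.le_centralizer_iff.mpr le_rfl
        unfold cdMeasure at h1
        rw [mul_comm] at h1
        have h3 := Nat.le_of_mul_le_mul_right h1 (cardpos _)
        exact (aux_eq_of_le_of_card_le hle h3).symm
      have hHdvd : H.index ∣ p ^ 4 := by
        rw [← hZ]; exact Subgroup.index_dvd_of_le hZle
      obtain ⟨k, hk4, hHidx⟩ := (Nat.dvd_prime_pow hp).mp hHdvd
      have hCidx : (Subgroup.centralizer (H : Set G)).index = p ^ (4 - k) := by
        have h1 : H.index * (Subgroup.centralizer (H : Set G)).index =
            H.index * p ^ (4 - k) := by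
          rw [hX, hHidx, ← pow_add]
          congr 1
          omega
        exact Nat.eq_of_mul_eq_mul_left (idxpos H) h1
      interval_cases k
      · -- k = 0 : H = ⊤
        have htop : H = ⊤ := Subgroup.index_eq_one.mp (by rw [hHidx, pow_zero])
        exact Or.inl (Or.inl (Or.inl (Or.inr htop)))
      · -- k = 1 : T-family
        norm_num at hCidx hHidx
        have hcardK : Nat.card (Subgroup.centralizer (H : Set G)) =
            p * Nat.card (Subgroup.center G) := by
          have h1 := Subgroup.card_mul_index (Subgroup.centralizer (H : Set G))
          have h2 := Subgroup.card_mul_index (Subgroup.center G)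
          rw [hCidx] at h1; rw [hZ] at h2
          have h3 : Nat.card (Subgroup.centralizer (H : Set G)) * p ^ 3 =
              (p * Nat.card (Subgroup.center G)) * p ^ 3 := by
            rw [h1, ← h2]; ring
          exact Nat.eq_of_mul_eq_mul_right (pow_pos hppos 3) h3
        have hKab : Subgroup.centralizer (H : Set G) ≤
            Subgroup.centralizer ((Subgroup.centralizer (H : Set G)) : Set G) :=
          aux_le_centralizer_self hp (Subgroup.center_le_centralizer _)
            (Subgroup.center_le_centralizer _) hcardK
        have hKH : Subgroup.centralizer (H : Set G) ≤ H := hKab.trans hclosed.le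
        have hcIn : centerIn H = Subgroup.centralizer (H : Set G) := by
          rw [aux_centerIn_eq]
          exact inf_eq_right.mpr hKH
        refine Or.inl (Or.inr ⟨hHidx, ?_⟩)
        · rw [hcIn]; exact hCidx
      · -- k = 2 : B-family
        norm_num at hCidx hHidx
        exact Or.inl (Or.inl (Or.inr ⟨hHidx, hCidx⟩))
      · -- k = 3 : Z-of-T family
        norm_num at hCidx hHidx
        have hcardH : Nat.card H = p * Nat.card (Subgroup.center G) := by
          have h1 := Subgroup.card_mul_index H
          have h2 := Subgroup.card_mul_index (Subgroup.center G)
          rw [hHidx] at h1; rw [hZ] at h2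
          have h3 : Nat.card H * p ^ 3 =
              (p * Nat.card (Subgroup.center G)) * p ^ 3 := by
            rw [h1, ← h2]; ring
          exact Nat.eq_of_mul_eq_mul_right (pow_pos hppos 3) h3
        have hHab : H ≤ Subgroup.centralizer (H : Set G) :=
          aux_le_centralizer_self hp hZle (Subgroup.center_le_centralizer _) hcardH
        have hcIn : centerIn (Subgroup.centralizer (H : Set G)) = H := by
          rw [aux_centerIn_eq, hclosed]
          exact inf_eq_right.mpr hHab
        refine Or.inr ⟨Subgroup.centralizer (H : Set G), hCidx, ?_, hcIn.symm⟩
        rw [hcIn]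
        exact hHidx
      · -- k = 4 : H = center
        have hcardH : Nat.card H = Nat.card (Subgroup.center G) := by
          have h1 := Subgroup.card_mul_index H
          have h2 := Subgroup.card_mul_index (Subgroup.center G)
          rw [hHidx] at h1; rw [hZ] at h2
          exact Nat.eq_of_mul_eq_mul_right hp4 (h1.trans h2.symm)
        have : Subgroup.center G = H := aux_eq_of_le_of_card_le hZle hcardH.le
        exact Or.inl (Or.inl (Or.inl (Or.inl this.symm)))
    · rintro ((((h | h) | ⟨hB1, hB2⟩) | ⟨hT1, hT2⟩) | ⟨T, hT1, hT2, rfl⟩)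
      · rw [h, hcentZ, Subgroup.index_top, hZ, mul_one]
      · rw [h, Subgroup.index_top, Subgroup.coe_top, Subgroup.centralizer_univ, hZ, one_mul]
      · rw [hB1, hB2]; ring
      · have hinf : centerIn H ≤ Subgroup.centralizer (H : Set G) := by
          rw [aux_centerIn_eq]; exact inf_le_right
        have hdvd : (Subgroup.centralizer (H : Set G)).index ∣ p ^ 3 := by
          rw [← hT2]; exact Subgroup.index_dvd_of_le hinf
        have hge : p ^ 3 ≤ (Subgroup.centralizer (H : Set G)).index := by
          have h := key H
          rw [hT1] at h
          refine Nat.le_of_mul_le_mul_left ?_ hppos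
          calc p * p ^ 3 = p ^ 4 := by ring
            _ ≤ p * _ := h
        have heq : (Subgroup.centralizer (H : Set G)).index = p ^ 3 :=
          le_antisymm (Nat.le_of_dvd (pow_pos hppos 3) hdvd) hge
        rw [hT1, heq]; ring
      · have hTle : T ≤ Subgroup.centralizer ((centerIn T : Subgroup G) : Set G) := by
          rw [aux_centerIn_eq]
          exact Subgroup.le_centralizer_iff.mpr inf_le_right
        have hdvd : (Subgroup.centralizer ((centerIn T : Subgroup G) : Set G)).index ∣ p := by
          rw [← hT1]; exact Subgroup.index_dvd_of_le hTle
        have hge : p ≤ (Subgroup.centralizer ((centerIn T : Subgroup G) : Set G)).index := by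
          have h := key (centerIn T)
          rw [hT2] at h
          refine Nat.le_of_mul_le_mul_left ?_ (pow_pos hppos 3)
          calc p ^ 3 * p = p ^ 4 := by ring
            _ ≤ p ^ 3 * _ := h
        have heq : (Subgroup.centralizer ((centerIn T : Subgroup G) : Set G)).index = p :=
          le_antisymm (Nat.le_of_dvd hppos hdvd) hge
        rw [hT2, heq]; ring
  · -- the counting statement
    rintro ⟨T, hT1, hT2⟩
    have hZ0T : centerIn T ≤ T := by rw [aux_centerIn_eq]; exact inf_le_left
    have hZ0C : centerIn T ≤ Subgroup.centralizer (T : Set G) := by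
      rw [aux_centerIn_eq]; exact inf_le_right
    have hTc : T ≤ Subgroup.centralizer ((centerIn T : Subgroup G) : Set G) :=
      Subgroup.le_centralizer_iff.mpr hZ0C
    have hZ0Z0 : centerIn T ≤ Subgroup.centralizer ((centerIn T : Subgroup G) : Set G) :=
      hZ0T.trans hTc
    have hcardT : Nat.card T = p ^ 2 * Nat.card (centerIn T) := by
      have h1 := Subgroup.card_mul_index T
      have h2 := Subgroup.card_mul_index (centerIn T)
      rw [hT1] at h1; rw [hT2] at h2
      have h3 : Nat.card T * p = (p ^ 2 * Nat.card (centerIn T)) * p := by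
        rw [h1, ← h2]; ring
      exact Nat.eq_of_mul_eq_mul_right hppos h3
    have hTnab : ¬(T ≤ Subgroup.centralizer (T : Set G)) := by
      intro hab
      have hTT : centerIn T = T := by
        rw [aux_centerIn_eq]; exact inf_eq_left.mpr hab
      rw [hTT, hT1] at hT2
      have h13 : p ^ 1 = p ^ 3 := by rw [pow_one]; exact hT2
      have := Nat.pow_right_injective hp.two_le h13
      omega
    have hcardS' : ∀ B : Subgroup G, B.index = p ^ 2 →
        Nat.card B = p * Nat.card (centerIn T) := by
      intro B hBidx
      have h1 := Subgroup.card_mul_index B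
      have h2 := Subgroup.card_mul_index (centerIn T)
      rw [hBidx] at h1; rw [hT2] at h2
      have h3 : Nat.card B * p ^ 2 = (p * Nat.card (centerIn T)) * p ^ 2 := by
        rw [h1, ← h2]; ring
      exact Nat.eq_of_mul_eq_mul_right (pow_pos hppos 2) h3
    set S' : Set (Subgroup G) :=
      {B : Subgroup G | centerIn T ≤ B ∧ B ≤ T ∧ B.index = p ^ 2} with hS'def
    have hBmem : ∀ x : G, x ∈ T → x ∉ centerIn T →
        (centerIn T ⊔ Subgroup.zpowers x) ∈ S' := by
      intro x hxT hxZ0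
      have hxc : x ∈ Subgroup.centralizer ((centerIn T : Subgroup G) : Set G) := hTc hxT
      have hBT : centerIn T ⊔ Subgroup.zpowers x ≤ T :=
        sup_le hZ0T (Subgroup.zpowers_le.mpr hxT)
      have hZ0B : centerIn T ≤ centerIn T ⊔ Subgroup.zpowers x := le_sup_left
      obtain ⟨t, ht⟩ := Subgroup.card_dvd_of_le hZ0B
      have htdvd : t ∣ p ^ 2 := by
        have hd : Nat.card (centerIn T) * t ∣ Nat.card (centerIn T) * p ^ 2 := by
          rw [← ht, mul_comm (Nat.card (centerIn T)) (p ^ 2), ← hcardT]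
          exact Subgroup.card_dvd_of_le hBT
        exact (Nat.mul_dvd_mul_iff_left (cardpos _)).mp hd
      obtain ⟨i, hi2, hti⟩ := (Nat.dvd_prime_pow hp).mp htdvd
      have hi0 : i ≠ 0 := by
        intro h
        rw [h, pow_zero] at hti
        rw [hti, mul_one] at ht
        have hEq : centerIn T = centerIn T ⊔ Subgroup.zpowers x :=
          aux_eq_of_le_of_card_le hZ0B ht.le
        apply hxZ0
        rw [hEq]
        exact le_sup_right (α := Subgroup G) (Subgroup.mem_zpowers x)
      have hi2' : i ≠ 2 := by
        intro h
        rw [h] at hti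
        rw [hti] at ht
        have hBTeq : centerIn T ⊔ Subgroup.zpowers x = T := by
          apply aux_eq_of_le_of_card_le hBT
          rw [hcardT, ht]
          ring_nf
          exact le_rfl
        apply hTnab
        rw [← hBTeq]
        exact aux_sup_zpowers_le_centralizer hZ0Z0 hxc
      have hit : t = p := by
        have hi1 : i = 1 := by omega
        rw [hi1, pow_one] at hti
        exact hti
      have hcardB : Nat.card (centerIn T ⊔ Subgroup.zpowers x : Subgroup G) =
          p * Nat.card (centerIn T) := by
        rw [ht, hit]; ring
      have hBidx : (centerIn T ⊔ Subgroup.zpowers x : Subgroup G).index = p ^ 2 := by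
        have h1 := Subgroup.card_mul_index (centerIn T ⊔ Subgroup.zpowers x : Subgroup G)
        have h2 := Subgroup.card_mul_index (centerIn T)
        rw [hT2] at h2
        have h3 : (centerIn T ⊔ Subgroup.zpowers x : Subgroup G).index *
            (p * Nat.card (centerIn T)) = p ^ 2 * (p * Nat.card (centerIn T)) := by
          have h4 : (centerIn T ⊔ Subgroup.zpowers x : Subgroup G).index *
              (p * Nat.card (centerIn T)) = Nat.card G := by
            rw [← hcardB, mul_comm]
            exact h1
          rw [h4, ← h2]; ring
        exact Nat.eq_of_mul_eq_mul_right (Nat.mul_pos hppos (cardpos _)) h3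
      exact ⟨hZ0B, hBT, hBidx⟩
    have hS'sub : S' ⊆ {B : Subgroup G | B.index = p ^ 2 ∧
        (Subgroup.centralizer (B : Set G)).index = p ^ 2} := by
      rintro B ⟨hZ0B, hBT, hBidx⟩
      have hcardB : Nat.card B = p * Nat.card (centerIn T) := hcardS' B hBidx
      have hab : B ≤ Subgroup.centralizer (B : Set G) :=
        aux_le_centralizer_self hp hZ0B
          (hZ0C.trans (Subgroup.centralizer_le (SetLike.coe_subset_coe.mpr hBT))) hcardB
      have hdvd : (Subgroup.centralizer (B : Set G)).index ∣ p ^ 2 := by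
        rw [← hBidx]; exact Subgroup.index_dvd_of_le hab
      have hge : p ^ 2 ≤ (Subgroup.centralizer (B : Set G)).index := by
        have h := key B
        rw [hBidx] at h
        refine Nat.le_of_mul_le_mul_left ?_ (pow_pos hppos 2)
        calc p ^ 2 * p ^ 2 = p ^ 4 := by ring
          _ ≤ p ^ 2 * _ := h
      exact ⟨hBidx, le_antisymm (Nat.le_of_dvd (pow_pos hppos 2) hdvd) hge⟩
    classical
    set s : Finset G :=
      (Set.toFinite ((T : Set G) \ ((centerIn T : Subgroup G) : Set G))).toFinset with hsdef
    set tt : Finset (Subgroup G) := (Set.toFinite S').toFinset with httdef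
    have hmapsto : ∀ a ∈ s, (centerIn T ⊔ Subgroup.zpowers a) ∈ tt := by
      intro a ha
      rw [Set.Finite.mem_toFinset] at ha
      rw [Set.Finite.mem_toFinset]
      exact hBmem a ha.1 (by simpa using ha.2)
    set n0 : ℕ := p * Nat.card (centerIn T) - Nat.card (centerIn T) with hn0def
    have hfilter : ∀ B ∈ tt,
        (s.filter (fun a => centerIn T ⊔ Subgroup.zpowers a = B)).card ≤ n0 := by
      intro B hB
      rw [Set.Finite.mem_toFinset] at hB
      obtain ⟨hZ0B, hBT, hBidx⟩ := hB
      have hcardB : Nat.card B = p * Nat.card (centerIn T) := hcardS' B hBidx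
      have hsub2 : s.filter (fun a => centerIn T ⊔ Subgroup.zpowers a = B) ⊆
          (Set.toFinite ((B : Set G) \ ((centerIn T : Subgroup G) : Set G))).toFinset := by
        intro a ha
        rw [Finset.mem_filter] at ha
        obtain ⟨has, hfa⟩ := ha
        rw [hsdef, Set.Finite.mem_toFinset] at has
        rw [Set.Finite.mem_toFinset]
        refine ⟨?_, has.2⟩
        have hmem : a ∈ centerIn T ⊔ Subgroup.zpowers a :=
          le_sup_right (α := Subgroup G) (Subgroup.mem_zpowers a)
        rw [hfa] at hmem
        exact hmem
      have hcard2 : ((Set.toFinite ((B : Set G) \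
          ((centerIn T : Subgroup G) : Set G))).toFinset).card +
          Nat.card (centerIn T) = Nat.card B := by
        have h := Set.ncard_diff_add_ncard_of_subset
          (SetLike.coe_subset_coe.mpr hZ0B) (Set.toFinite _)
        rw [Set.ncard_eq_toFinset_card _ (Set.toFinite _)] at h
        rw [← Nat.card_coe_set_eq, ← Nat.card_coe_set_eq] at h
        exact h
      have hX : ((Set.toFinite ((B : Set G) \
          ((centerIn T : Subgroup G) : Set G))).toFinset).card = n0 := by
        rw [hn0def, ← hcardB]
        omega
      exact (Finset.card_le_card hsub2).trans hX.le
    have hcount := Finset.card_le_mul_card_image_of_maps_to hmapsto n0 hfilter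
    have hscard : s.card + Nat.card (centerIn T) = Nat.card T := by
      have h := Set.ncard_diff_add_ncard_of_subset
        (SetLike.coe_subset_coe.mpr hZ0T) (Set.toFinite _)
      rw [Set.ncard_eq_toFinset_card _ (Set.toFinite _)] at h
      rw [← Nat.card_coe_set_eq, ← Nat.card_coe_set_eq] at h
      exact h
    have hfinal : p + 1 ≤ tt.card := by
      by_contra hcon
      push_neg at hcon
      have hk : tt.card ≤ p := by omega
      have h5 : s.card ≤ n0 * p := hcount.trans (Nat.mul_le_mul_left n0 hk)
      have h6 : n0 + Nat.card (centerIn T) = p * Nat.card (centerIn T) := by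
        have hle : Nat.card (centerIn T) ≤ p * Nat.card (centerIn T) :=
          Nat.le_mul_of_pos_left _ hppos
        omega
      have h7 : n0 * p + Nat.card (centerIn T) * p = p ^ 2 * Nat.card (centerIn T) := by
        calc n0 * p + Nat.card (centerIn T) * p = (n0 + Nat.card (centerIn T)) * p := by ring
          _ = (p * Nat.card (centerIn T)) * p := by rw [h6]
          _ = p ^ 2 * Nat.card (centerIn T) := by ring
      have h8 : s.card + Nat.card (centerIn T) = n0 * p + Nat.card (centerIn T) * p := by
        rw [hscard, hcardT, ← h7]
      have hY : Nat.card (centerIn T) * 2 ≤ Nat.card (centerIn T) * p :=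
        Nat.mul_le_mul_left _ hp.two_le
      have hc1 : 0 < Nat.card (centerIn T) := cardpos _
      generalize hA1 : n0 * p = X at h5 h8
      generalize hA2 : Nat.card (centerIn T) * p = Y at h8 hY
      omega
    calc p + 1 ≤ tt.card := hfinal
      _ = S'.ncard := (Set.ncard_eq_toFinset_card _ _).symm
      _ ≤ _ := Set.ncard_le_ncard hS'sub (Set.toFinite _)
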